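/- Let α₁ > α₂ > α₃, β₁ > β₂ > β₃ and γ₁ ≥ γ₂ ≥ γ₃ be real numbers with γ₁+γ₂+γ₃ = Σαᵢ + Σβᵢ. If γ is the spectrum of A + B for some 3×3 Hermitian matrices A, B with spectra α, β, then: α₃+β₃ ≤ γ₃ ≤ min(α₁+β₃, α₂+β₂, α₃+β₁), max(α₂+β₃, α₃+β₂) ≤ γ₂ ≤ min(α₁+β₂, α₂+β₁), and max(α₁+β₃, α₂+β₂, α₃+β₁) ≤ γ₁ ≤ α₁+β₁. -/

import Mathlib

open Matrix


/-- `A` (Hermitian, with diagonalization witness `hA`) has eigenvalues given by the tuple `a`,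
up to a permutation. -/
def eigsEq {n : ℕ} {A : Matrix (Fin n) (Fin n) ℂ} (hA : A.IsHermitian) (a : Fin n → ℝ) : Prop :=
  ∃ σ : Equiv.Perm (Fin n), ∀ i, hA.eigenvalues (σ i) = a i

section HornHelpers

open Finset

local notation "⟪" x ", " y "⟫" => @inner ℂ _ _ x y

variable {n : ℕ} {M : Matrix (Fin n) (Fin n) ℂ} (hM : M.IsHermitian)

/-- coefficients vanish off the spanning set -/
lemma coeff_zero_off (S : Finset (Fin n)) {x : EuclideanSpace ℂ (Fin n)}
    (hx : x ∈ Submodule.span ℂ (hM.eigenvectorBasis '' ↑S))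
    {i : Fin n} (hi : i ∉ S) : ⟪hM.eigenvectorBasis i, x⟫ = 0 := by
  induction hx using Submodule.span_induction with
  | mem y hy =>
    obtain ⟨j, hj, rfl⟩ := hy
    exact hM.eigenvectorBasis.orthonormal.2 (fun h => hi (h ▸ hj))
  | zero => simp
  | add y z _ _ hy hz => simp [inner_add_right, hy, hz]
  | smul c y _ hy => simp [inner_smul_right, hy]

lemma inner_eigen_mulVec (x : EuclideanSpace ℂ (Fin n)) (i : Fin n) :
    ⟪hM.eigenvectorBasis i, (WithLp.toLp 2 (M *ᵥ x) : EuclideanSpace ℂ (Fin n))⟫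
      = (hM.eigenvalues i : ℂ) * ⟪hM.eigenvectorBasis i, x⟫ := by
  rw [EuclideanSpace.inner_eq_star_dotProduct, EuclideanSpace.inner_eq_star_dotProduct]
  rw [dotProduct_comm]
  show dotProduct (star (⇑(hM.eigenvectorBasis i))) (M *ᵥ x) = _
  rw [Matrix.dotProduct_mulVec]
  have : star (⇑(hM.eigenvectorBasis i)) ᵥ* M = star (M *ᵥ ⇑(hM.eigenvectorBasis i)) := by
    rw [star_mulVec, hM.eq]
  rw [this, hM.mulVec_eigenvectorBasis]
  show dotProduct (star ((hM.eigenvalues i : ℂ) • ⇑(hM.eigenvectorBasis i))) _ = _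
  rw [star_smul, smul_dotProduct]
  simp [dotProduct, mul_comm]

lemma rayleigh_expand (x : EuclideanSpace ℂ (Fin n)) :
    Complex.re ⟪x, (WithLp.toLp 2 (M *ᵥ x) : EuclideanSpace ℂ (Fin n))⟫
      = ∑ i, hM.eigenvalues i * ‖⟪hM.eigenvectorBasis i, x⟫‖ ^ 2 := by
  rw [← hM.eigenvectorBasis.sum_inner_mul_inner x (WithLp.toLp 2 (M *ᵥ x) : EuclideanSpace ℂ (Fin n))]
  rw [Complex.re_sum]
  refine Finset.sum_congr rfl fun i _ => ?_
  rw [inner_eigen_mulVec, ← inner_conj_symm]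
  set c := ⟪hM.eigenvectorBasis i, x⟫
  have : (starRingEnd ℂ) c * ((hM.eigenvalues i : ℂ) * c)
      = ((hM.eigenvalues i * ‖c‖ ^ 2 : ℝ) : ℂ) := by
    rw [mul_left_comm, RCLike.conj_mul]
    simp only [RCLike.ofReal_alg, Complex.real_smul, mul_one, Complex.ofReal_mul,
      Complex.ofReal_pow]
  rw [this, Complex.ofReal_re]

lemma norm_sq_expand (x : EuclideanSpace ℂ (Fin n)) :
    ‖x‖ ^ 2 = ∑ i, ‖⟪hM.eigenvectorBasis i, x⟫‖ ^ 2 := by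
  rw [← inner_self_eq_norm_sq (𝕜 := ℂ) x,
    ← hM.eigenvectorBasis.sum_inner_mul_inner x x, map_sum]
  refine Finset.sum_congr rfl fun i _ => ?_
  rw [← inner_conj_symm, RCLike.conj_mul]
  simp [← Complex.ofReal_pow]

lemma rayleigh_le (S : Finset (Fin n)) (c : ℝ) (hc : ∀ j ∈ S, hM.eigenvalues j ≤ c)
    {x : EuclideanSpace ℂ (Fin n)}
    (hx : x ∈ Submodule.span ℂ (hM.eigenvectorBasis '' ↑S)) :
    Complex.re ⟪x, (WithLp.toLp 2 (M *ᵥ x) : EuclideanSpace ℂ (Fin n))⟫ ≤ c * ‖x‖ ^ 2 := by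
  rw [rayleigh_expand, norm_sq_expand hM, Finset.mul_sum]
  refine Finset.sum_le_sum fun i _ => ?_
  by_cases hi : i ∈ S
  · exact mul_le_mul_of_nonneg_right (hc i hi) (by positivity)
  · rw [coeff_zero_off hM S hx hi]; simp

lemma rayleigh_ge (S : Finset (Fin n)) (c : ℝ) (hc : ∀ j ∈ S, c ≤ hM.eigenvalues j)
    {x : EuclideanSpace ℂ (Fin n)}
    (hx : x ∈ Submodule.span ℂ (hM.eigenvectorBasis '' ↑S)) :
    c * ‖x‖ ^ 2 ≤ Complex.re ⟪x, (WithLp.toLp 2 (M *ᵥ x) : EuclideanSpace ℂ (Fin n))⟫ := by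
  rw [rayleigh_expand, norm_sq_expand hM, Finset.mul_sum]
  refine Finset.sum_le_sum fun i _ => ?_
  by_cases hi : i ∈ S
  · exact mul_le_mul_of_nonneg_right (hc i hi) (by positivity)
  · rw [coeff_zero_off hM S hx hi]; simp

lemma finrank_span_eigen (S : Finset (Fin n)) :
    Module.finrank ℂ (Submodule.span ℂ (hM.eigenvectorBasis '' ↑S)) = S.card := by
  rw [Set.image_eq_range]
  have := finrank_span_eq_card
    (hM.eigenvectorBasis.orthonormal.linearIndependent.comp
      (Subtype.val : (↑S : Set (Fin n)) → Fin n) Subtype.val_injective)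
  simpa [Function.comp_def] using this

lemma triple_inter (U V W : Submodule ℂ (EuclideanSpace ℂ (Fin 3)))
    (h : 6 < Module.finrank ℂ U + Module.finrank ℂ V + Module.finrank ℂ W) :
    ∃ x : EuclideanSpace ℂ (Fin 3), x ∈ U ∧ x ∈ V ∧ x ∈ W ∧ x ≠ 0 := by
  have h3 : Module.finrank ℂ (EuclideanSpace ℂ (Fin 3)) = 3 := finrank_euclideanSpace_fin
  have e1 := Submodule.finrank_sup_add_finrank_inf_eq U V
  have e2 := Submodule.finrank_sup_add_finrank_inf_eq (U ⊓ V) W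
  have l1 : Module.finrank ℂ ↥(U ⊔ V) ≤ 3 := by
    have := Submodule.finrank_le (U ⊔ V)
    omega
  have l2 : Module.finrank ℂ ↥((U ⊓ V) ⊔ W) ≤ 3 := by
    have := Submodule.finrank_le ((U ⊓ V) ⊔ W)
    omega
  have hp : 0 < Module.finrank ℂ ↥(U ⊓ V ⊓ W) := by omega
  have hbot : U ⊓ V ⊓ W ≠ ⊥ := by
    intro hb
    rw [hb, finrank_bot] at hp
    exact lt_irrefl 0 hp
  obtain ⟨x, hx, hx0⟩ := Submodule.exists_mem_ne_zero_of_ne_bot hbot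
  exact ⟨x, hx.1.1, hx.1.2, hx.2, hx0⟩

lemma re_inner_add_mulVec {A B : Matrix (Fin 3) (Fin 3) ℂ} (x : EuclideanSpace ℂ (Fin 3)) :
    Complex.re ⟪x, (WithLp.toLp 2 ((A + B) *ᵥ x) : EuclideanSpace ℂ (Fin 3))⟫
      = Complex.re ⟪x, (WithLp.toLp 2 (A *ᵥ x) : EuclideanSpace ℂ (Fin 3))⟫
        + Complex.re ⟪x, (WithLp.toLp 2 (B *ᵥ x) : EuclideanSpace ℂ (Fin 3))⟫ := by
  have : (WithLp.toLp 2 ((A + B) *ᵥ x) : EuclideanSpace ℂ (Fin 3))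
      = ((WithLp.toLp 2 (A *ᵥ x) : EuclideanSpace ℂ (Fin 3)) + (WithLp.toLp 2 (B *ᵥ x) : EuclideanSpace ℂ (Fin 3))) :=
    congrArg (WithLp.toLp 2) (Matrix.add_mulVec A B x)
  rw [this, inner_add_right]
  simp

lemma weyl_core {A B : Matrix (Fin 3) (Fin 3) ℂ} (hA : A.IsHermitian) (hB : B.IsHermitian)
    (SA SB SC : Finset (Fin 3)) (hcard : 6 < SA.card + SB.card + SC.card)
    (a b c : ℝ)
    (ha : ∀ i ∈ SA, hA.eigenvalues i ≤ a) (hb : ∀ i ∈ SB, hB.eigenvalues i ≤ b)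
    (hc : ∀ i ∈ SC, c ≤ (hA.add hB).eigenvalues i) : c ≤ a + b := by
  obtain ⟨x, hxU, hxV, hxW, hx0⟩ := triple_inter
    (Submodule.span ℂ (hA.eigenvectorBasis '' ↑SA))
    (Submodule.span ℂ (hB.eigenvectorBasis '' ↑SB))
    (Submodule.span ℂ ((hA.add hB).eigenvectorBasis '' ↑SC))
    (by rw [finrank_span_eigen, finrank_span_eigen, finrank_span_eigen]; exact hcard)
  have h1 := rayleigh_le hA SA a ha hxU
  have h2 := rayleigh_le hB SB b hb hxV
  have h3 := rayleigh_ge (hA.add hB) SC c hc hxW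
  have key := re_inner_add_mulVec (A := A) (B := B) x
  have hn : 0 < ‖x‖ ^ 2 := pow_pos (norm_pos_iff.mpr hx0) 2
  have hm : c * ‖x‖ ^ 2 ≤ (a + b) * ‖x‖ ^ 2 := by rw [add_mul]; linarith
  exact (mul_le_mul_iff_of_pos_right hn).1 hm

lemma weyl_core' {A B : Matrix (Fin 3) (Fin 3) ℂ} (hA : A.IsHermitian) (hB : B.IsHermitian)
    (SA SB SC : Finset (Fin 3)) (hcard : 6 < SA.card + SB.card + SC.card)
    (a b c : ℝ)
    (ha : ∀ i ∈ SA, a ≤ hA.eigenvalues i) (hb : ∀ i ∈ SB, b ≤ hB.eigenvalues i)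
    (hc : ∀ i ∈ SC, (hA.add hB).eigenvalues i ≤ c) : a + b ≤ c := by
  obtain ⟨x, hxU, hxV, hxW, hx0⟩ := triple_inter
    (Submodule.span ℂ (hA.eigenvectorBasis '' ↑SA))
    (Submodule.span ℂ (hB.eigenvectorBasis '' ↑SB))
    (Submodule.span ℂ ((hA.add hB).eigenvectorBasis '' ↑SC))
    (by rw [finrank_span_eigen, finrank_span_eigen, finrank_span_eigen]; exact hcard)
  have h1 := rayleigh_ge hA SA a ha hxU
  have h2 := rayleigh_ge hB SB b hb hxV
  have h3 := rayleigh_le (hA.add hB) SC c hc hxW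
  have key := re_inner_add_mulVec (A := A) (B := B) x
  have hn : 0 < ‖x‖ ^ 2 := pow_pos (norm_pos_iff.mpr hx0) 2
  have hm : (a + b) * ‖x‖ ^ 2 ≤ c * ‖x‖ ^ 2 := by rw [add_mul]; linarith
  exact (mul_le_mul_iff_of_pos_right hn).1 hm

end HornHelpers

/-- Horn's inequalities for `n = 3`: necessary conditions on the ordered spectrum `γ` of the
sum of two Hermitian 3×3 matrices with ordered spectra `α` and `β`. -/
theorem horn_n3_inequalities (α₁ α₂ α₃ β₁ β₂ β₃ γ₁ γ₂ γ₃ : ℝ)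
    (hα : α₃ < α₂ ∧ α₂ < α₁) (hβ : β₃ < β₂ ∧ β₂ < β₁) (hγ : γ₃ ≤ γ₂ ∧ γ₂ ≤ γ₁)
    (htr : γ₁ + γ₂ + γ₃ = α₁ + α₂ + α₃ + β₁ + β₂ + β₃)
    (A B : Matrix (Fin 3) (Fin 3) ℂ) (hA : A.IsHermitian) (hB : B.IsHermitian)
    (hAe : eigsEq hA ![α₁, α₂, α₃]) (hBe : eigsEq hB ![β₁, β₂, β₃])
    (hCe : eigsEq (hA.add hB) ![γ₁, γ₂, γ₃]) :
    (α₃ + β₃ ≤ γ₃ ∧ γ₃ ≤ min (α₁ + β₃) (min (α₂ + β₂) (α₃ + β₁))) ∧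
    (max (α₂ + β₃) (α₃ + β₂) ≤ γ₂ ∧ γ₂ ≤ min (α₁ + β₂) (α₂ + β₁)) ∧
    (max (α₁ + β₃) (max (α₂ + β₂) (α₃ + β₁)) ≤ γ₁ ∧ γ₁ ≤ α₁ + β₁) := by
  obtain ⟨σA, hσA⟩ := hAe
  obtain ⟨σB, hσB⟩ := hBe
  obtain ⟨σC, hσC⟩ := hCe
  have cardim : ∀ (σ : Equiv.Perm (Fin 3)) (T : Finset (Fin 3)),
      (T.image σ).card = T.card := fun σ T => Finset.card_image_of_injective T σ.injective
  have W : ∀ (TA TB TC : Finset (Fin 3)) (a b c : ℝ),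
      6 < TA.card + TB.card + TC.card →
      (∀ k ∈ TA, ![α₁,α₂,α₃] k ≤ a) → (∀ k ∈ TB, ![β₁,β₂,β₃] k ≤ b) →
      (∀ k ∈ TC, c ≤ ![γ₁,γ₂,γ₃] k) → c ≤ a + b := by
    intro TA TB TC a b c hcard ha hb hc
    refine weyl_core hA hB (TA.image σA) (TB.image σB) (TC.image σC) ?_ a b c ?_ ?_ ?_
    · rw [cardim, cardim, cardim]; exact hcard
    · intro i hi; obtain ⟨k, hk, rfl⟩ := Finset.mem_image.1 hi; rw [hσA k]; exact ha k hk
    · intro i hi; obtain ⟨k, hk, rfl⟩ := Finset.mem_image.1 hi; rw [hσB k]; exact hb k hk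
    · intro i hi; obtain ⟨k, hk, rfl⟩ := Finset.mem_image.1 hi; rw [hσC k]; exact hc k hk
  have W' : ∀ (TA TB TC : Finset (Fin 3)) (a b c : ℝ),
      6 < TA.card + TB.card + TC.card →
      (∀ k ∈ TA, a ≤ ![α₁,α₂,α₃] k) → (∀ k ∈ TB, b ≤ ![β₁,β₂,β₃] k) →
      (∀ k ∈ TC, ![γ₁,γ₂,γ₃] k ≤ c) → a + b ≤ c := by
    intro TA TB TC a b c hcard ha hb hc
    refine weyl_core' hA hB (TA.image σA) (TB.image σB) (TC.image σC) ?_ a b c ?_ ?_ ?_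
    · rw [cardim, cardim, cardim]; exact hcard
    · intro i hi; obtain ⟨k, hk, rfl⟩ := Finset.mem_image.1 hi; rw [hσA k]; exact ha k hk
    · intro i hi; obtain ⟨k, hk, rfl⟩ := Finset.mem_image.1 hi; rw [hσB k]; exact hb k hk
    · intro i hi; obtain ⟨k, hk, rfl⟩ := Finset.mem_image.1 hi; rw [hσC k]; exact hc k hk
  obtain ⟨ha1, ha2⟩ := hα
  obtain ⟨hb1, hb2⟩ := hβ
  obtain ⟨hg1, hg2⟩ := hγ
  have u13 : γ₃ ≤ α₁ + β₃ := W {0,1,2} {2} {0,1,2} _ _ _ (by decide)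
    (by intro k hk; fin_cases hk <;> simp <;> linarith)
    (by intro k hk; fin_cases hk <;> simp <;> linarith)
    (by intro k hk; fin_cases hk <;> simp <;> linarith)
  have u22 : γ₃ ≤ α₂ + β₂ := W {1,2} {1,2} {0,1,2} _ _ _ (by decide)
    (by intro k hk; fin_cases hk <;> simp <;> linarith)
    (by intro k hk; fin_cases hk <;> simp <;> linarith)
    (by intro k hk; fin_cases hk <;> simp <;> linarith)
  have u31 : γ₃ ≤ α₃ + β₁ := W {2} {0,1,2} {0,1,2} _ _ _ (by decide)
    (by intro k hk; fin_cases hk <;> simp <;> linarith)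
    (by intro k hk; fin_cases hk <;> simp <;> linarith)
    (by intro k hk; fin_cases hk <;> simp <;> linarith)
  have u12 : γ₂ ≤ α₁ + β₂ := W {0,1,2} {1,2} {0,1} _ _ _ (by decide)
    (by intro k hk; fin_cases hk <;> simp <;> linarith)
    (by intro k hk; fin_cases hk <;> simp <;> linarith)
    (by intro k hk; fin_cases hk <;> simp <;> linarith)
  have u21 : γ₂ ≤ α₂ + β₁ := W {1,2} {0,1,2} {0,1} _ _ _ (by decide)
    (by intro k hk; fin_cases hk <;> simp <;> linarith)
    (by intro k hk; fin_cases hk <;> simp <;> linarith)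
    (by intro k hk; fin_cases hk <;> simp <;> linarith)
  have u11 : γ₁ ≤ α₁ + β₁ := W {0,1,2} {0,1,2} {0} _ _ _ (by decide)
    (by intro k hk; fin_cases hk <;> simp <;> linarith)
    (by intro k hk; fin_cases hk <;> simp <;> linarith)
    (by intro k hk; fin_cases hk <;> simp <;> linarith)
  have l33 : α₃ + β₃ ≤ γ₃ := W' {0,1,2} {0,1,2} {2} _ _ _ (by decide)
    (by intro k hk; fin_cases hk <;> simp <;> linarith)
    (by intro k hk; fin_cases hk <;> simp <;> linarith)
    (by intro k hk; fin_cases hk <;> simp <;> linarith)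
  have l23 : α₂ + β₃ ≤ γ₂ := W' {0,1} {0,1,2} {1,2} _ _ _ (by decide)
    (by intro k hk; fin_cases hk <;> simp <;> linarith)
    (by intro k hk; fin_cases hk <;> simp <;> linarith)
    (by intro k hk; fin_cases hk <;> simp <;> linarith)
  have l32 : α₃ + β₂ ≤ γ₂ := W' {0,1,2} {0,1} {1,2} _ _ _ (by decide)
    (by intro k hk; fin_cases hk <;> simp <;> linarith)
    (by intro k hk; fin_cases hk <;> simp <;> linarith)
    (by intro k hk; fin_cases hk <;> simp <;> linarith)
  have l13 : α₁ + β₃ ≤ γ₁ := W' {0} {0,1,2} {0,1,2} _ _ _ (by decide)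
    (by intro k hk; fin_cases hk <;> simp <;> linarith)
    (by intro k hk; fin_cases hk <;> simp <;> linarith)
    (by intro k hk; fin_cases hk <;> simp <;> linarith)
  have l22 : α₂ + β₂ ≤ γ₁ := W' {0,1} {0,1} {0,1,2} _ _ _ (by decide)
    (by intro k hk; fin_cases hk <;> simp <;> linarith)
    (by intro k hk; fin_cases hk <;> simp <;> linarith)
    (by intro k hk; fin_cases hk <;> simp <;> linarith)
  have l31 : α₃ + β₁ ≤ γ₁ := W' {0,1,2} {0} {0,1,2} _ _ _ (by decide)
    (by intro k hk; fin_cases hk <;> simp <;> linarith)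
    (by intro k hk; fin_cases hk <;> simp <;> linarith)
    (by intro k hk; fin_cases hk <;> simp <;> linarith)
  exact ⟨⟨l33, le_min u13 (le_min u22 u31)⟩,
    ⟨max_le l23 l32, le_min u12 u21⟩,
    ⟨max_le l13 (max_le l22 l31), u11⟩⟩
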